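/- For the Boltzmann–Shannon entropy h(ξ) = ξ log ξ, a > 0, η > 0, and any x > 0, the point p := Prox^h_{η|·−a|}(x) (given by the three-piece formula e^η x, a, e^{−η} x) satisfies the first-order optimality condition for min_{ξ>0} ( η|ξ−a| + D_h(ξ,x) ): there exists s ∈ ∂|·−a|(p) (so s ∈ {−1,1} if p ≠ a and s ∈ [−1,1] if p = a) with η·s + log p − log x = 0. -/

import Mathlib

/-- First-order optimality condition for the scalar Bregman proximity operator:
the three-piece point p satisfies η·s + log p − log x = 0 for some subgradient
s ∈ ∂|·−a|(p). -/
theorem stmt18 (a η x : ℝ) (ha : 0 < a) (hη : 0 < η) (hx : 0 < x) :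
    let p : ℝ := if x < a * Real.exp (-η) then Real.exp η * x
      else if x ≤ a * Real.exp η then a else Real.exp (-η) * x
    ∃ s : ℝ, (p ≠ a → s = Real.sign (p - a)) ∧ (p = a → s ∈ Set.Icc (-1 : ℝ) 1) ∧
      η * s + Real.log p - Real.log x = 0 := by
  intro p
  by_cases h1 : x < a * Real.exp (-η)
  · have hp : p = Real.exp η * x := by simp [p, h1]
    have hlt : p < a := by
      rw [hp]
      have : Real.exp η * x < Real.exp η * (a * Real.exp (-η)) := by
        exact mul_lt_mul_of_pos_left h1 (Real.exp_pos η)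
      calc Real.exp η * x < Real.exp η * (a * Real.exp (-η)) := this
        _ = a := by rw [mul_comm a, ← mul_assoc, ← Real.exp_add]; simp
    refine ⟨-1, fun _ => ?_, fun hpa => absurd hpa hlt.ne, ?_⟩
    · rw [Real.sign_of_neg (by linarith)]
    · rw [hp, Real.log_mul (Real.exp_ne_zero η) hx.ne', Real.log_exp]; ring
  · push_neg at h1
    by_cases h2 : x ≤ a * Real.exp η
    · have hp : p = a := by simp [p, not_lt.2 h1, h2]
      refine ⟨(Real.log x - Real.log a) / η, fun hpa => absurd hp hpa, fun _ => ?_, ?_⟩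
      · constructor
        · rw [le_div_iff₀ hη]
          have := Real.log_le_log (mul_pos ha (Real.exp_pos _)) h1
          rw [Real.log_mul ha.ne' (Real.exp_ne_zero _), Real.log_exp] at this
          linarith
        · rw [div_le_iff₀ hη]
          have := Real.log_le_log hx h2
          rw [Real.log_mul ha.ne' (Real.exp_ne_zero _), Real.log_exp] at this
          linarith
      · rw [hp]
        field_simp
        ring
    · push_neg at h2
      have hp : p = Real.exp (-η) * x := by simp [p, not_lt.2 h1, not_le.2 h2]
      have hgt : a < p := by
        rw [hp]
        have : Real.exp (-η) * (a * Real.exp η) < Real.exp (-η) * x :=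
          mul_lt_mul_of_pos_left h2 (Real.exp_pos _)
        calc a = Real.exp (-η) * (a * Real.exp η) := by
                rw [mul_comm a, ← mul_assoc, ← Real.exp_add]; simp
          _ < Real.exp (-η) * x := this
      refine ⟨1, fun _ => ?_, fun hpa => absurd hpa.symm hgt.ne, ?_⟩
      · rw [Real.sign_of_pos (by linarith)]
      · rw [hp, Real.log_mul (Real.exp_ne_zero _) hx.ne', Real.log_exp]; ring
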